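/- If a topological group G acts continuously on a pointed topological space X, then the class in the fundamental group π₁(X, x₀) represented by the orbit loop t ↦ (γ(t)) • x₀, for γ a loop at the identity of G, is central in π₁(X, x₀). -/

import Mathlib

/-- Two paths (with possibly different, but equal, endpoints) that have the same
underlying functions as a homotopic pair of paths are themselves homotopic. -/
private lemma homotopic_of_coe_eq {X : Type*} [TopologicalSpace X] {x y x' y' : X}
    {p q : Path x y} {p' q' : Path x' y'} (hp : ⇑p = ⇑p') (hq : ⇑q = ⇑q')
    (h : p'.Homotopic q') : p.Homotopic q := by
  have hp' : p.toContinuousMap = p'.toContinuousMap := ContinuousMap.ext (congrFun hp)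
  have hq' : q.toContinuousMap = q'.toContinuousMap := ContinuousMap.ext (congrFun hq)
  obtain ⟨F⟩ := h
  refine ⟨?_⟩
  show ContinuousMap.HomotopyRel p.toContinuousMap q.toContinuousMap {0, 1}
  rw [hp', hq']
  exact F

/-- If a topological group `G` acts continuously on a pointed topological
space `X`, then the class in `π₁(X, x₀)` represented by the orbit loop
`t ↦ γ(t) • x₀`, for `γ` a loop at the identity of `G`, is central in `π₁(X, x₀)`:
its homotopy class commutes with the homotopy class of every loop at `x₀`. -/
theorem orbit_loop_central {G X : Type*} [TopologicalSpace G] [Group G]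
    [IsTopologicalGroup G] [TopologicalSpace X] [MulAction G X] [ContinuousSMul G X]
    (x₀ : X) (γ : Path (1 : G) (1 : G)) :
    ∀ α : Path x₀ x₀,
      (⟦(Path.mk ⟨fun t => γ t • x₀, (γ.continuous.smul continuous_const : _)⟩
          (by simp) (by simp) : Path x₀ x₀).trans α⟧ :
            Path.Homotopic.Quotient x₀ x₀)
        = ⟦α.trans (Path.mk ⟨fun t => γ t • x₀,
            (γ.continuous.smul continuous_const : _)⟩ (by simp) (by simp))⟧ := by
  intro α
  set β : Path x₀ x₀ := Path.mk ⟨fun t => γ t • x₀,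
    (γ.continuous.smul continuous_const : _)⟩ (by simp) (by simp) with hβdef
  let φ : C(G × X, X) := ⟨fun p => p.1 • p.2, continuous_smul⟩
  set e : Path (1 : G) (1 : G) := Path.refl 1 with he
  set r : Path x₀ x₀ := Path.refl x₀ with hr
  have h1 : (γ.trans e).Homotopic (e.trans γ) :=
    ⟨(Path.Homotopy.transRefl γ).trans (Path.Homotopy.reflTrans γ).symm⟩
  have h2 : (r.trans α).Homotopic (α.trans r) :=
    ⟨(Path.Homotopy.reflTrans α).trans (Path.Homotopy.transRefl α).symm⟩
  have h' : (((γ.prod r).trans (e.prod α)).map φ.continuous).Homotopic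
      (((e.prod α).trans (γ.prod r)).map φ.continuous) := by
    rw [Path.trans_prod_eq_prod_trans, Path.trans_prod_eq_prod_trans]
    exact Path.Homotopic.map (Nonempty.map2 Path.Homotopic.prodHomotopy h1 h2) φ
  have hcoe1 : ⇑(β.trans α) = ⇑(((γ.prod r).trans (e.prod α)).map φ.continuous) := by
    funext t
    simp only [Path.map_coe, Function.comp_apply, Path.trans_apply]
    split_ifs <;> simp [β, φ, e, r, Path.prod_coe]
  have hcoe2 : ⇑(α.trans β) = ⇑(((e.prod α).trans (γ.prod r)).map φ.continuous) := by
    funext t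
    simp only [Path.map_coe, Function.comp_apply, Path.trans_apply]
    split_ifs <;> simp [β, φ, e, r, Path.prod_coe]
  exact Quotient.sound (homotopic_of_coe_eq hcoe1 hcoe2 h')
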